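/- arXiv:2303.17382 — 2 statements merged into one kernel-verified Lean document; each statement's English description precedes it below -/
import Mathlib

section
/- Let (X,T) be a subshift of {0,1}^ℤ such that for every x ∈ X, every k ∈ ℤ and every n ≥ 1, the word x(k)x(k+1)⋯x(k+4·3^n) contains a block of 2n−1 consecutive 1's. Then for every ergodic T-invariant Borel probability measure μ and every n ≥ 1, μ(Î_n) ≥ 1/(4·3^n), where Î_n = { x ∈ X : x(k) = 1 for all −n+1 ≤ k ≤ n−1 }. -/
open MeasureTheory
open scoped ENNReal

/-- The cylinder `Î_n` of points with 1's in all coordinates `−(n−1), …, n−1`. -/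
def Ihat (X : Set (ℤ → Bool)) (n : ℕ) : Set (ℤ → Bool) :=
  {x ∈ X | ∀ k : ℤ, -((n : ℤ) - 1) ≤ k → k ≤ (n : ℤ) - 1 → x k = true}

private lemma iter_apply (T : (ℤ → Bool) → (ℤ → Bool)) (hT : ∀ x k, T x k = x (k + 1)) :
    ∀ (m : ℕ) (x : ℤ → Bool) (t : ℤ), T^[m] x t = x (t + m)
  | 0, x, t => by simp
  | (m + 1), x, t => by
      rw [Function.iterate_succ_apply, iter_apply T hT m (T x) t, hT]
      push_cast
      ring_nf

private lemma Ihat_measurable (X : Set (ℤ → Bool)) (hX : IsClosed X) (n : ℕ) :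
    MeasurableSet (Ihat X n) := by
  have h1 : MeasurableSet X := hX.measurableSet
  have h2 : Ihat X n = X ∩ ⋂ k : ℤ,
      {x : ℤ → Bool | -((n : ℤ) - 1) ≤ k → k ≤ (n : ℤ) - 1 → x k = true} := by
    ext x
    simp [Ihat, Set.mem_iInter]
  rw [h2]
  refine h1.inter (MeasurableSet.iInter fun k => ?_)
  by_cases h : -((n : ℤ) - 1) ≤ k ∧ k ≤ (n : ℤ) - 1
  · have : {x : ℤ → Bool | -((n : ℤ) - 1) ≤ k → k ≤ (n : ℤ) - 1 → x k = true}
        = (fun x : ℤ → Bool => x k) ⁻¹' {true} := by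
      ext x
      exact ⟨fun hx => hx h.1 h.2, fun hx _ _ => hx⟩
    rw [this]
    exact measurable_pi_apply k (measurableSet_singleton true)
  · have : {x : ℤ → Bool | -((n : ℤ) - 1) ≤ k → k ≤ (n : ℤ) - 1 → x k = true} = Set.univ := by
      ext x
      simp only [Set.mem_setOf_eq, Set.mem_univ, iff_true]
      intro h1 h2
      exact absurd ⟨h1, h2⟩ h
    rw [this]
    exact MeasurableSet.univ

/-- if every window of length `4·3ⁿ + 1` of every point of the subshift `X`
contains a block of `2n − 1` consecutive 1's, then every ergodic shift-invariant Borel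
probability measure `μ` carried by `X` satisfies `μ(Î_n) ≥ 1/(4·3ⁿ)`. -/
theorem measure_Ihat_lower_bound
    (T : (ℤ → Bool) → (ℤ → Bool)) (hT : ∀ x k, T x k = x (k + 1))
    (X : Set (ℤ → Bool)) (hXclosed : IsClosed X) (hXinv : T '' X = X)
    (hblock : ∀ x ∈ X, ∀ k : ℤ, ∀ n : ℕ, 1 ≤ n →
      ∃ j : ℤ, k ≤ j ∧ j + (2 * (n : ℤ) - 2) ≤ k + 4 * 3 ^ n ∧
        ∀ i : ℤ, 0 ≤ i → i ≤ 2 * (n : ℤ) - 2 → x (j + i) = true)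
    (μ : Measure (ℤ → Bool)) [IsProbabilityMeasure μ]
    (hμX : μ X = 1) (herg : Ergodic T μ) :
    ∀ n : ℕ, 1 ≤ n → 1 / (4 * 3 ^ n : ℝ≥0∞) ≤ μ (Ihat X n) := by
  intro n hn
  set A := Ihat X n with hA_def
  have hA : MeasurableSet A := Ihat_measurable X hXclosed n
  have hXmeas : MeasurableSet X := hXclosed.measurableSet
  have hTX : ∀ x ∈ X, T x ∈ X := by
    intro x hx
    have : T x ∈ T '' X := ⟨x, hx, rfl⟩
    rwa [hXinv] at this
  have hTXm : ∀ (m : ℕ) (x : ℤ → Bool), x ∈ X → T^[m] x ∈ X := by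
    intro m
    induction m with
    | zero => intro x hx; simpa using hx
    | succ m ih =>
        intro x hx
        rw [Function.iterate_succ_apply]
        exact ih _ (hTX x hx)
  have hmp : MeasurePreserving T μ μ := herg.toMeasurePreserving
  have hpre : ∀ m : ℕ, μ (T^[m] ⁻¹' A) = μ A := fun m =>
    (hmp.iterate m).measure_preimage hA.nullMeasurableSet
  have hmem : ∀ (x : ℤ → Bool), x ∈ X → ∀ m : ℕ,
      (∀ k : ℤ, -((n : ℤ) - 1) ≤ k → k ≤ (n : ℤ) - 1 → x (k + m) = true) → T^[m] x ∈ A := by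
    intro x hx m h
    refine ⟨hTXm m x hx, fun k h1 h2 => ?_⟩
    rw [iter_apply T hT m x k]
    exact h k h1 h2
  rcases eq_or_lt_of_le hn with h1 | h2
  · -- case n = 1
    subst h1
    -- every window of length 13 contains a 1
    have hone : ∀ x ∈ X, ∀ k : ℤ, ∃ j : ℤ, k ≤ j ∧ j ≤ k + 12 ∧ x j = true := by
      intro x hx k
      obtain ⟨j, hj1, hj2, hj3⟩ := hblock x hx k 1 le_rfl
      refine ⟨j, hj1, by norm_num at hj2 ⊢; omega, ?_⟩
      have := hj3 0 le_rfl (by norm_num)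
      simpa using this
    -- every window of length 37 contains a block of 3 ones
    have hthree : ∀ x ∈ X, ∃ j : ℤ, 0 ≤ j ∧ j ≤ 34 ∧
        x j = true ∧ x (j + 1) = true ∧ x (j + 2) = true := by
      intro x hx
      obtain ⟨j, hj1, hj2, hj3⟩ := hblock x hx 0 2 (by norm_num)
      norm_num at hj2
      refine ⟨j, hj1, by omega, ?_, ?_, ?_⟩
      · simpa using hj3 0 le_rfl (by norm_num)
      · exact hj3 1 (by norm_num) (by norm_num)
      · exact hj3 2 (by norm_num) (by norm_num)
    -- every window of length 37 contains (at least) 4 ones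
    have hfour : ∀ x ∈ X, ∃ S : Finset ℕ, S ⊆ Finset.range 37 ∧ S.card = 4 ∧
        ∀ m ∈ S, x (m : ℤ) = true := by
      intro x hx
      obtain ⟨j, hj0, hj34, e0, e1, e2⟩ := hthree x hx
      by_cases hc : j ≤ 12
      · obtain ⟨j', h1', h2', e'⟩ := hone x hx (j + 3)
        have hj'0 : 0 ≤ j' := by omega
        refine ⟨{j.toNat, j.toNat + 1, j.toNat + 2, j'.toNat}, ?_, ?_, ?_⟩
        · intro m hm
          simp only [Finset.mem_insert, Finset.mem_singleton] at hm
          simp only [Finset.mem_range]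
          omega
        · rw [Finset.card_insert_of_notMem (by
              simp only [Finset.mem_insert, Finset.mem_singleton]; omega),
            Finset.card_insert_of_notMem (by
              simp only [Finset.mem_insert, Finset.mem_singleton]; omega),
            Finset.card_insert_of_notMem (by
              simp only [Finset.mem_singleton]; omega),
            Finset.card_singleton]
        · intro m hm
          simp only [Finset.mem_insert, Finset.mem_singleton] at hm
          rcases hm with rfl | rfl | rfl | rfl
          · rwa [Int.toNat_of_nonneg hj0]
          · rwa [show ((j.toNat + 1 : ℕ) : ℤ) = j + 1 by push_cast [Int.toNat_of_nonneg hj0]; ring]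
          · rwa [show ((j.toNat + 2 : ℕ) : ℤ) = j + 2 by push_cast [Int.toNat_of_nonneg hj0]; ring]
          · rwa [Int.toNat_of_nonneg hj'0]
      · obtain ⟨j', h1', h2', e'⟩ := hone x hx 0
        refine ⟨{j'.toNat, j.toNat, j.toNat + 1, j.toNat + 2}, ?_, ?_, ?_⟩
        · intro m hm
          simp only [Finset.mem_insert, Finset.mem_singleton] at hm
          simp only [Finset.mem_range]
          omega
        · rw [Finset.card_insert_of_notMem (by
              simp only [Finset.mem_insert, Finset.mem_singleton]; omega),
            Finset.card_insert_of_notMem (by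
              simp only [Finset.mem_insert, Finset.mem_singleton]; omega),
            Finset.card_insert_of_notMem (by
              simp only [Finset.mem_singleton]; omega),
            Finset.card_singleton]
        · intro m hm
          simp only [Finset.mem_insert, Finset.mem_singleton] at hm
          rcases hm with rfl | rfl | rfl | rfl
          · rwa [Int.toNat_of_nonneg h1']
          · rwa [Int.toNat_of_nonneg hj0]
          · rwa [show ((j.toNat + 1 : ℕ) : ℤ) = j + 1 by push_cast [Int.toNat_of_nonneg hj0]; ring]
          · rwa [show ((j.toNat + 2 : ℕ) : ℤ) = j + 2 by push_cast [Int.toNat_of_nonneg hj0]; ring]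
    have hmeas_m : ∀ m : ℕ,
        Measurable fun x : ℤ → Bool => A.indicator (1 : (ℤ → Bool) → ℝ≥0∞) (T^[m] x) :=
      fun m => (measurable_one.indicator hA).comp (hmp.iterate m).measurable
    have key : (4 : ℝ≥0∞) ≤ 37 * μ A := by
      have hc1 : (4 : ℝ≥0∞) = ∫⁻ x, X.indicator (fun _ => (4 : ℝ≥0∞)) x ∂μ := by
        rw [lintegral_indicator hXmeas]
        simp [hμX]
      have hc2 : ∫⁻ x, X.indicator (fun _ => (4 : ℝ≥0∞)) x ∂μ
          ≤ ∫⁻ x, ∑ m ∈ Finset.range 37, A.indicator 1 (T^[m] x) ∂μ := by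
        apply lintegral_mono
        intro x
        by_cases hx : x ∈ X
        · rw [Set.indicator_of_mem hx]
          obtain ⟨S, hS1, hS2, hS3⟩ := hfour x hx
          have hSA : ∀ m ∈ S, T^[m] x ∈ A := by
            intro m hm
            apply hmem x hx m
            intro k hk1 hk2
            have hk0 : k = 0 := by omega
            subst hk0
            simpa using hS3 m hm
          calc (4 : ℝ≥0∞) = ∑ m ∈ S, (1 : ℝ≥0∞) := by
                rw [Finset.sum_const, hS2]; simp
            _ = ∑ m ∈ S, A.indicator 1 (T^[m] x) := by
                refine Finset.sum_congr rfl fun m hm => ?_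
                rw [Set.indicator_of_mem (hSA m hm)]
                rfl
            _ ≤ ∑ m ∈ Finset.range 37, A.indicator 1 (T^[m] x) :=
                Finset.sum_le_sum_of_subset hS1
        · rw [Set.indicator_of_notMem hx]
          exact zero_le
      have hc3 : ∫⁻ x, ∑ m ∈ Finset.range 37, A.indicator 1 (T^[m] x) ∂μ = 37 * μ A := by
        rw [lintegral_finset_sum _ fun m _ => hmeas_m m]
        have : ∀ m ∈ Finset.range 37,
            ∫⁻ x, A.indicator (1 : (ℤ → Bool) → ℝ≥0∞) (T^[m] x) ∂μ = μ A := by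
          intro m _
          rw [(hmp.iterate m).lintegral_comp (measurable_one.indicator hA),
            lintegral_indicator hA]
          simp
        rw [Finset.sum_congr rfl this, Finset.sum_const, Finset.card_range]
        simp [mul_comm]
      calc (4 : ℝ≥0∞) = _ := hc1
        _ ≤ _ := hc2
        _ = 37 * μ A := hc3
    have h12 : (1 : ℝ≥0∞) ≤ 12 * μ A := by
      have h48 : (4 : ℝ≥0∞) * 1 ≤ 4 * (12 * μ A) := by
        calc (4 : ℝ≥0∞) * 1 = 4 := mul_one 4
          _ ≤ 37 * μ A := key
          _ ≤ 48 * μ A := by gcongr; norm_num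
          _ = 4 * (12 * μ A) := by ring
      exact (ENNReal.mul_le_mul_iff_right (by norm_num) (by norm_num)).mp h48
    have : (4 * 3 ^ 1 : ℝ≥0∞) = 12 := by norm_num
    rw [this]
    exact ENNReal.div_le_of_le_mul (by rwa [mul_comm] at h12)
  · -- case n ≥ 2
    set N : ℕ := 4 * 3 ^ n with hN_def
    have hNcast : (N : ℤ) = 4 * (3 : ℤ) ^ n := by push_cast [hN_def]; ring
    have hcover : X ⊆ ⋃ m ∈ Finset.range N, T^[m] ⁻¹' A := by
      intro x hx
      obtain ⟨j, hj1, hj2, hj3⟩ := hblock x hx (1 - (n : ℤ)) n hn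
      have hm0 : 0 ≤ j + (n : ℤ) - 1 := by omega
      have hmlt : j + (n : ℤ) - 1 < (N : ℤ) := by
        rw [hNcast]
        have h2' : (2 : ℤ) ≤ (n : ℤ) := by exact_mod_cast h2
        omega
      refine Set.mem_biUnion (Finset.mem_range.mpr (by omega : (j + (n : ℤ) - 1).toNat < N)) ?_
      apply hmem x hx (j + (n : ℤ) - 1).toNat
      intro k hk1 hk2
      have hcast : (((j + (n : ℤ) - 1).toNat : ℤ)) = j + (n : ℤ) - 1 := Int.toNat_of_nonneg hm0
      have := hj3 (k + (n : ℤ) - 1) (by omega) (by omega)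
      rw [show k + (((j + (n : ℤ) - 1).toNat : ℤ)) = j + (k + (n : ℤ) - 1) by
        rw [hcast]; ring]
      exact this
    have h1le : (1 : ℝ≥0∞) ≤ (N : ℝ≥0∞) * μ A := by
      calc (1 : ℝ≥0∞) = μ X := hμX.symm
        _ ≤ μ (⋃ m ∈ Finset.range N, T^[m] ⁻¹' A) := measure_mono hcover
        _ ≤ ∑ m ∈ Finset.range N, μ (T^[m] ⁻¹' A) := measure_biUnion_finset_le _ _
        _ = ∑ m ∈ Finset.range N, μ A := by
            exact Finset.sum_congr rfl fun m _ => hpre m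
        _ = (N : ℝ≥0∞) * μ A := by
            rw [Finset.sum_const, Finset.card_range]; simp [mul_comm]
    have hNe : (4 * 3 ^ n : ℝ≥0∞) = (N : ℝ≥0∞) := by push_cast [hN_def]; ring
    rw [hNe]
    exact ENNReal.div_le_of_le_mul (by rwa [mul_comm] at h1le)
end

section
/- In the Ohno construction, the roof function γ defined by γ(x) = n·4·3^n for x ∈ Î_n \ Î_{n+1} (n ≥ 1) and γ(x) = 1 for x ∈ X_* \ Î_1 satisfies E_μ(γ) = ∫ γ dμ = +∞ for every non-trivial ergodic T-invariant measure μ, because E_μ(γ) > n·4·3^n · μ(Î_n) > n for every n, using μ(Î_n) ≥ 1/(4·3^n). -/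
open MeasureTheory
open scoped ENNReal

/-- the Ohno roof function `γ` (equal to `n·4·3ⁿ` on `Î_n \ Î_{n+1}` and to `1`
off `Î_1`) has infinite integral with respect to every non-trivial ergodic shift-invariant
measure `μ`, since `∫ γ dμ ≥ n·4·3ⁿ·μ(Î_n) ≥ n` for every `n`. -/
theorem ohno_roof_integral_infinite
    (T : (ℤ → Bool) → (ℤ → Bool)) (hT : ∀ x k, T x k = x (k + 1))
    (X : Set (ℤ → Bool)) (hXclosed : IsClosed X) (hXinv : T '' X = X)
    (μ : Measure (ℤ → Bool)) [IsProbabilityMeasure μ]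
    (hμX : μ X = 1) (herg : Ergodic T μ)
    (hnontriv : μ ≠ Measure.dirac (fun _ => true))
    (hbound : ∀ n : ℕ, 1 ≤ n → 1 / (4 * 3 ^ n : ℝ≥0∞) ≤ μ (Ihat X n))
    (γ : (ℤ → Bool) → ℝ≥0∞)
    (hγ : ∀ n : ℕ, 1 ≤ n → ∀ x ∈ Ihat X n \ Ihat X (n + 1),
      γ x = ((n : ℝ≥0∞) * 4 * 3 ^ n))
    (hγ' : ∀ x ∈ X \ Ihat X 1, γ x = 1) :
    (∀ n : ℕ, 1 ≤ n → (n : ℝ≥0∞) ≤ ∫⁻ x, γ x ∂μ) ∧ ∫⁻ x, γ x ∂μ = ∞ := by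
  classical
  set one : ℤ → Bool := fun _ => true with hone
  -- measurability of the cylinders
  have hmeasI : ∀ n : ℕ, MeasurableSet (Ihat X n) := by
    intro n
    have h1 : MeasurableSet {x : ℤ → Bool |
        ∀ k : ℤ, -((n : ℤ) - 1) ≤ k → k ≤ (n : ℤ) - 1 → x k = true} := by
      have : {x : ℤ → Bool | ∀ k : ℤ, -((n : ℤ) - 1) ≤ k → k ≤ (n : ℤ) - 1 → x k = true}
          = ⋂ (k : ℤ), ⋂ (_ : -((n : ℤ) - 1) ≤ k), ⋂ (_ : k ≤ (n : ℤ) - 1),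
              (fun x : ℤ → Bool => x k) ⁻¹' {true} := by
        ext x; simp [Set.mem_iInter]
      rw [this]
      exact MeasurableSet.iInter fun k => MeasurableSet.iInter fun _ =>
        MeasurableSet.iInter fun _ => (measurable_pi_apply k) (measurableSet_singleton true)
    exact hXclosed.measurableSet.inter h1
  have hsing : MeasurableSet ({one} : Set (ℤ → Bool)) := by
    have : ({one} : Set (ℤ → Bool)) = ⋂ (k : ℤ), (fun x : ℤ → Bool => x k) ⁻¹' {true} := by
      ext x
      simp only [Set.mem_singleton_iff, Set.mem_iInter, Set.mem_preimage,
        Set.mem_singleton_iff, funext_iff, hone]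
    rw [this]
    exact MeasurableSet.iInter fun k => (measurable_pi_apply k) (measurableSet_singleton true)
  -- the fixed point has measure zero
  have hfix : T ⁻¹' ({one} : Set (ℤ → Bool)) = {one} := by
    ext x
    simp only [Set.mem_preimage, Set.mem_singleton_iff, funext_iff, hT, hone]
    constructor
    · intro h k; have := h (k - 1); simpa using this
    · intro h k; exact h (k + 1)
  have hμone : μ ({one} : Set (ℤ → Bool)) = 0 := by
    rcases herg.measure_self_or_compl_eq_zero hsing hfix with h | h
    · exact h
    · exfalso
      apply hnontriv
      ext s hs
      rw [Measure.dirac_apply' _ hs]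
      by_cases h1 : one ∈ s
      · have hc : sᶜ ⊆ ({one} : Set (ℤ → Bool))ᶜ := by
          intro x hx hx'
          exact hx (hx' ▸ h1)
        have : μ sᶜ = 0 := measure_mono_null hc h
        have hμs : μ s = 1 := by
          have := prob_compl_eq_zero_iff hs |>.1 this
          exact this
        simp [hμs, Set.indicator_of_mem h1]
      · have hc : s ⊆ ({one} : Set (ℤ → Bool))ᶜ := by
          intro x hx hx'
          exact h1 (by rwa [Set.mem_singleton_iff.1 hx'] at hx)
        have : μ s = 0 := measure_mono_null hc h
        simp [this, Set.indicator_of_notMem h1]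
  -- pointwise lower bound on Î_n \ {one}
  have hpt : ∀ n : ℕ, 1 ≤ n → ∀ x ∈ Ihat X n \ {one},
      ((n : ℝ≥0∞) * 4 * 3 ^ n) ≤ γ x := by
    intro n hn x hx
    obtain ⟨hxI, hxone⟩ := hx
    have hxX : x ∈ X := hxI.1
    have hk0 : ∃ k : ℤ, x k = false := by
      by_contra h
      push_neg at h
      apply hxone
      have : x = one := funext fun k => by
        cases hxk : x k with
        | false => exact absurd hxk (h k)
        | true => rfl
      exact this
    obtain ⟨k0, hk0⟩ := hk0
    have hQ : ∃ j : ℕ, x ∉ Ihat X (n + 1 + j) := by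
      refine ⟨k0.natAbs, fun h => ?_⟩
      have := h.2 k0 (by omega) (by omega)
      rw [this] at hk0
      simp at hk0
    set j := Nat.find hQ with hj
    set m := n + j with hm
    have hnotmem : x ∉ Ihat X (m + 1) := by
      have := Nat.find_spec hQ
      have heq : n + 1 + j = m + 1 := by omega
      rwa [heq] at this
    have hmem : x ∈ Ihat X m := by
      rcases Nat.eq_zero_or_pos j with h0 | hpos
      · rw [hm, h0]; simpa using hxI
      · obtain ⟨j', hj'⟩ : ∃ j', j = j' + 1 := ⟨j - 1, by omega⟩
        have hmin := Nat.find_min hQ (m := j') (by omega)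
        simp only [not_not] at hmin
        have heq : n + 1 + j' = m := by omega
        rwa [heq] at hmin
    have hγx : γ x = ((m : ℝ≥0∞) * 4 * 3 ^ m) := hγ m (by omega) x ⟨hmem, hnotmem⟩
    rw [hγx]
    have hnm : n ≤ m := by omega
    gcongr <;> simp [Nat.cast_le, hnm]
  -- the main bound
  have key : ∀ n : ℕ, 1 ≤ n → (n : ℝ≥0∞) ≤ ∫⁻ x, γ x ∂μ := by
    intro n hn
    set c : ℝ≥0∞ := (n : ℝ≥0∞) * 4 * 3 ^ n with hc
    set s : Set (ℤ → Bool) := Ihat X n \ {one} with hs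
    have hmeas_s : MeasurableSet s := (hmeasI n).diff hsing
    have h1 : ∫⁻ x, s.indicator (fun _ => c) x ∂μ ≤ ∫⁻ x, γ x ∂μ := by
      apply lintegral_mono
      intro x
      by_cases hx : x ∈ s
      · rw [Set.indicator_of_mem hx]
        exact hpt n hn x hx
      · rw [Set.indicator_of_notMem hx]
        exact zero_le
    have h2 : ∫⁻ x, s.indicator (fun _ => c) x ∂μ = c * μ s := by
      exact lintegral_indicator_const hmeas_s c
    have hμs : μ s = μ (Ihat X n) := measure_diff_null hμone
    have h3 : (1 : ℝ≥0∞) / (4 * 3 ^ n) ≤ μ s := hμs ▸ hbound n hn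
    have h4 : (n : ℝ≥0∞) ≤ c * μ s := by
      calc (n : ℝ≥0∞) = c * (1 / (4 * 3 ^ n)) := by
            rw [hc]
            rw [mul_one_div, mul_assoc]
            rw [mul_div_assoc]
            rw [ENNReal.div_self (by
              intro h
              rw [mul_eq_zero] at h
              rcases h with h | h
              · norm_num at h
              · exact (pow_ne_zero n (by norm_num : (3:ℝ≥0∞) ≠ 0)) h) (by
              exact ENNReal.mul_ne_top (by norm_num) (ENNReal.pow_ne_top (by norm_num)))]
            rw [mul_one]
        _ ≤ c * μ s := by gcongr
    calc (n : ℝ≥0∞) ≤ c * μ s := h4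
      _ = ∫⁻ x, s.indicator (fun _ => c) x ∂μ := h2.symm
      _ ≤ ∫⁻ x, γ x ∂μ := h1
  refine ⟨key, ?_⟩
  rw [eq_top_iff, ← ENNReal.iSup_natCast]
  refine iSup_le fun n => ?_
  cases n with
  | zero => simp
  | succ n => exact key (n + 1) (by omega)
end
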